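/- Let n be a positive integer and let σ, τ be distinct permutations of {1,…,n} such that the permutation τ∘σ^{-1} is a single cycle (IsCycle). Define the 0/1 matrix w by w_{i,j} := 1 if j = σ(i) or j = τ(i), and w_{i,j} := 0 otherwise. Then Σ_{i=1}^n w_{i,σ(i)} = Σ_{i=1}^n w_{i,τ(i)} = n, and for every permutation π of {1,…,n} with π ≠ σ and π ≠ τ one has Σ_{i=1}^n w_{i,π(i)} < n. (Consequently, the linear functional x ↦ Σ_{i,j} w_{i,j} x_{i,j} attains its maximum over the Birkhoff polytope exactly at the two permutation matrices x_σ and x_τ, so [x_σ, x_τ] is an edge of the Birkhoff polytope and x_σ − x_τ is an edge-direction.) -/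

import Mathlib

lemma aux_cycle_decomp {α : Type*} [Fintype α] [DecidableEq α] (ρ η : Equiv.Perm α)
    (hc : ρ.IsCycle) (h : ∀ j, η j = j ∨ η j = ρ j) : η = 1 ∨ η = ρ := by
  by_cases hx : ∃ j, ρ j ≠ j ∧ η j = j
  · obtain ⟨j, hj, hηj⟩ := hx
    left
    have key : ∀ m : ℕ, ∀ k, ρ k ≠ k → (ρ ^ m) k = j → η k = k := by
      intro m
      induction m with
      | zero => intro k _ hkj; simp at hkj; subst hkj; exact hηj
      | succ m ih =>
        intro k hk hkj
        have h1 : ρ (ρ k) ≠ ρ k := fun he => hk (ρ.injective he)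
        have h2 : (ρ ^ m) (ρ k) = j := by
          rw [← hkj, pow_succ, Equiv.Perm.mul_apply]
        have h3 := ih (ρ k) h1 h2
        rcases h k with h' | h'
        · exact h'
        · exact absurd (η.injective (h'.trans h3.symm)) (fun he => hk he.symm)
    ext k
    simp only [Equiv.Perm.one_apply]
    rcases eq_or_ne (ρ k) k with hk | hk
    · rcases h k with h' | h'
      · exact h'
      · rw [h', hk]
    · obtain ⟨m, hm⟩ := hc.exists_pow_eq hk hj
      exact key m k hk hm
  · push_neg at hx
    right
    ext k
    rcases eq_or_ne (ρ k) k with hk | hk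
    · rcases h k with h' | h'
      · rw [h', hk]
      · exact h'
    · rcases h k with h' | h'
      · exact absurd h' (hx k hk)
      · exact h'

theorem circuit_gives_edge (n : ℕ) (hn : 0 < n) (σ τ : Equiv.Perm (Fin n))
    (hne : σ ≠ τ) (hcyc : (τ * σ⁻¹).IsCycle)
    (w : Matrix (Fin n) (Fin n) ℕ)
    (hw : ∀ i j, w i j = if j = σ i ∨ j = τ i then 1 else 0) :
    (∑ i, w i (σ i) = n) ∧ (∑ i, w i (τ i) = n) ∧
      ∀ π : Equiv.Perm (Fin n), π ≠ σ → π ≠ τ → ∑ i, w i (π i) < n := by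
  refine ⟨?_, ?_, ?_⟩
  · have : ∀ i, w i (σ i) = 1 := fun i => by rw [hw]; simp
    simp [this]
  · have : ∀ i, w i (τ i) = 1 := fun i => by rw [hw]; simp
    simp [this]
  · intro π hπσ hπτ
    have hle : ∀ i, w i (π i) ≤ 1 := fun i => by
      rw [hw]; split <;> simp
    have hex : ∃ i, w i (π i) = 0 := by
      by_contra hcon
      push_neg at hcon
      have hall : ∀ i, π i = σ i ∨ π i = τ i := by
        intro i
        by_contra hni
        exact hcon i (by rw [hw]; simp [hni])
      have h' : ∀ j, (π * σ⁻¹) j = j ∨ (π * σ⁻¹) j = (τ * σ⁻¹) j := by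
        intro j
        rcases hall (σ⁻¹ j) with h | h
        · left; simp only [Equiv.Perm.mul_apply]; exact h.trans (by simp)
        · right; simp only [Equiv.Perm.mul_apply]; exact h
      rcases aux_cycle_decomp (τ * σ⁻¹) (π * σ⁻¹) hcyc h' with h | h
      · exact hπσ (mul_inv_eq_one.mp h)
      · exact hπτ (mul_right_cancel h)
    obtain ⟨i, hi⟩ := hex
    calc ∑ i, w i (π i) < ∑ _i : Fin n, 1 := by
          apply Finset.sum_lt_sum (fun i _ => hle i)
          exact ⟨i, Finset.mem_univ i, by rw [hi]; norm_num⟩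
      _ = n := by simp
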